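/- For an odd prime p, the Mahler measure of g_p(x) = (x^p - x)/p + 1 equals 1. -/

import Mathlib

open Polynomial

/-- The Mahler measure of a complex polynomial `P = c ∏ (X - αⱼ)` :
`M(P) = |c| ∏ max 1 |αⱼ|`. -/
noncomputable def mahlerMeasure (P : Polynomial ℂ) : ℝ :=
  ‖P.leadingCoeff‖ * ((P.roots.map (fun a => max 1 ‖a‖)).prod)

theorem mahler_of_gp_eq_one (p : ℕ) (hp : p.Prime) (hodd : Odd p) :
    _root_.mahlerMeasure (((C (1 / (p : ℚ))) * (X ^ p - X) + 1).map (algebraMap ℚ ℂ)) = 1 := by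
  set Q := ((C (1 / (p : ℚ))) * (X ^ p - X) + 1).map (algebraMap ℚ ℂ) with hQ
  have hp3 : 3 ≤ p := by
    have h2 := hp.two_le
    have hne : p ≠ 2 := by rintro rfl; exact (by decide : ¬ Odd 2) hodd
    omega
  have hp0 : (p : ℂ) ≠ 0 := by
    exact_mod_cast Nat.cast_ne_zero.mpr hp.ne_zero
  have heval : ∀ a : ℂ, Q.eval a = (p : ℂ)⁻¹ * (a ^ p - a) + 1 := by
    intro a
    simp [hQ, eval_map, eval₂_add, eval₂_mul, eval₂_sub, eval₂_pow, one_div]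
  have hroot : ∀ a ∈ Q.roots, 1 ≤ ‖a‖ := by
    intro a ha
    have h0 : Q.eval a = 0 := (mem_roots'.mp ha).2
    rw [heval] at h0
    have hap : a ^ p - a = -(p : ℂ) := by
      field_simp at h0
      linear_combination h0
    by_contra hlt
    push_neg at hlt
    have h1 : ‖a ^ p - a‖ ≤ 2 := by
      calc ‖a ^ p - a‖ ≤ ‖a ^ p‖ + ‖a‖ :=
            norm_sub_le _ _
        _ ≤ 1 + 1 := by
            refine add_le_add ?_ hlt.le
            rw [norm_pow]
            exact pow_le_one₀ (norm_nonneg _) hlt.le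
        _ = 2 := by norm_num
    rw [hap] at h1
    simp only [norm_neg, Complex.norm_natCast] at h1
    have : (3 : ℝ) ≤ p := by exact_mod_cast hp3
    linarith
  have hsplit : Q.Splits := IsAlgClosed.splits Q
  have hfac := hsplit.eq_prod_roots
  have hQ0 : Q.eval 0 = 1 := by rw [heval]; simp [zero_pow hp.ne_zero]
  have habs : ‖Q.leadingCoeff‖ * ((Q.roots.map (fun a => ‖a‖)).prod) = 1 := by
    have := congrArg (fun P => ‖Polynomial.eval 0 P‖) hfac
    simp only [eval_mul, eval_C, eval_multiset_prod, Multiset.map_map, Function.comp,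
      eval_sub, eval_X, eval_C, zero_sub, norm_mul, hQ0, norm_one] at this
    rw [← normHom_apply (Multiset.prod _), map_multiset_prod] at this
    simp only [Multiset.map_map, Function.comp, normHom_apply, norm_neg] at this
    linarith [this]
  rw [_root_.mahlerMeasure]
  rw [Multiset.map_congr rfl (fun a ha => max_eq_right (hroot a ha))]
  exact habs
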